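/- Let l, m, n ∈ ℝ. The Hessian of A(y₁,y₂) = l(y₁⁴ + y₂⁴) + m(y₁³y₂ + y₁y₂³) + n y₁²y₂² is positive definite at every (y₁,y₂) ≠ (0,0) if and only if (3/2)√(4l² + 2m²) - 3l < n < 6l. -/

import Mathlib

noncomputable def pd1 (f : ℝ → ℝ → ℝ) : ℝ → ℝ → ℝ := fun x y => deriv (fun t => f t y) x
noncomputable def pd2 (f : ℝ → ℝ → ℝ) : ℝ → ℝ → ℝ := fun x y => deriv (fun t => f x t) y

open Matrix

private lemma deriv_quartic (a b c d e x : ℝ) :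
    deriv (fun t : ℝ => a*t^4 + b*t^3 + c*t^2 + d*t + e) x
      = 4*a*x^3 + 3*b*x^2 + 2*c*x + d := by
  have h : HasDerivAt (fun t : ℝ => a*t^4 + b*t^3 + c*t^2 + d*t + e)
      (4*a*x^3 + 3*b*x^2 + 2*c*x + d) x := by
    have h4 := (hasDerivAt_pow 4 x).const_mul a
    have h3 := (hasDerivAt_pow 3 x).const_mul b
    have h2 := (hasDerivAt_pow 2 x).const_mul c
    have h1 := (hasDerivAt_id x).const_mul d
    have := (((h4.add h3).add h2).add h1).add_const e
    refine this.congr_deriv ?_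
    norm_num; ring
  exact h.deriv

private lemma quadpos {a b c x z : ℝ} (ha : 0 < a) (hd : 0 < a*c - b^2)
    (hx : ¬(x = 0 ∧ z = 0)) : 0 < a*x^2 + 2*b*x*z + c*z^2 := by
  rcases eq_or_ne z 0 with hz | hz
  · subst hz
    have hx0 : x ≠ 0 := fun h => hx ⟨h, rfl⟩
    nlinarith [mul_self_pos.mpr hx0]
  · have h1 : 0 < (a*c-b^2)*z^2 := by positivity
    nlinarith [sq_nonneg (a*x+b*z)]

private lemma aux_pos {l m n : ℝ} (hu : 0 < 2*l+n)
    (hm2 : 4*m^2 < (2*l+n)^2) : 0 < 2*l+n+2*m ∧ 0 < 2*l+n-2*m := by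
  constructor <;> nlinarith [hm2, hu]

set_option maxHeartbeats 800000 in
private lemma aux_det {l m n s p : ℝ} (hl : 0 < l) (hn : 0 < n) (h6 : n < 6*l)
    (hP : 0 < 2*n^2+12*l*n-9*m^2) (hs : 0 < s) (hcone : 4*p^2 ≤ s^2) :
    0 < (24*l*n-9*m^2)*s^2 + 2*(6*m*(6*l-n))*p*s
        + 4*(36*l^2-12*l*n-3*n^2+9*m^2)*p^2 := by
  have hm2 : 4*m^2 < (2*l+n)^2 := by nlinarith [sq_nonneg (6*l - n)]
  have hu : 0 < 2*l+n := by linarith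
  obtain ⟨hA1, hA2⟩ := aux_pos hu hm2
  have hq1 : 0 < (6*l-n)*(2*l+n+2*m) := mul_pos (by linarith) hA1
  have hq2 : 0 < (6*l-n)*(2*l+n-2*m) := mul_pos (by linarith) hA2
  rcases le_or_gt (36*l^2-12*l*n-3*n^2+9*m^2) (24*l*n-9*m^2) with hDC | hDC
  · rcases le_or_gt 0 p with hp0 | hp0
    · nlinarith [mul_pos hq1 (pow_pos (by linarith : 0 < s + 2*p) 2),
        mul_nonneg hq2.le (sq_nonneg (s - 2*p)),
        mul_nonneg (by linarith : (0:ℝ) ≤ (24*l*n-9*m^2) - (36*l^2-12*l*n-3*n^2+9*m^2))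
          (by linarith : (0:ℝ) ≤ s^2 - 4*p^2)]
    · nlinarith [mul_pos hq2 (pow_pos (by linarith : 0 < s - 2*p) 2),
        mul_nonneg hq1.le (sq_nonneg (s + 2*p)),
        mul_nonneg (by linarith : (0:ℝ) ≤ (24*l*n-9*m^2) - (36*l^2-12*l*n-3*n^2+9*m^2))
          (by linarith : (0:ℝ) ≤ s^2 - 4*p^2)]
  · have hQ : 0 < 8*l^2 - 4*l*n + m^2 := by nlinarith [sq_nonneg (6*l-n)]
    have hDpos : 0 < 36*l^2-12*l*n-3*n^2+9*m^2 := by nlinarith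
    nlinarith [sq_nonneg (4*(36*l^2-12*l*n-3*n^2+9*m^2)*p + 6*m*(6*l-n)*s),
      mul_pos (mul_pos hP hQ) (pow_pos hs 2), mul_pos hDpos hs]

set_option maxHeartbeats 800000 in
private lemma aux_fwd {l m n : ℝ} (hl : 0 < l) (hn : 0 < n) (hC : 0 < 24*l*n-9*m^2)
    (h6 : n < 6*l) (hP : 2*n^2+12*l*n-9*m^2 ≤ 0) :
    ∃ y₁ y₂ : ℝ, ¬(y₁ = 0 ∧ y₂ = 0) ∧
      (12*l*y₁^2+6*m*y₁*y₂+2*n*y₂^2)*(12*l*y₂^2+6*m*y₁*y₂+2*n*y₁^2)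
        - (3*m*y₁^2+4*n*y₁*y₂+3*m*y₂^2)*(3*m*y₁^2+4*n*y₁*y₂+3*m*y₂^2) ≤ 0 := by
  set B : ℝ := 6*m*(6*l - n) with hB
  set D : ℝ := 36*l^2 - 12*l*n - 3*n^2 + 9*m^2 with hD
  have hDpos : 0 < D := by simp only [hD]; nlinarith
  have hD36 : 36*l^2 - n^2 ≤ D := by simp only [hD]; linarith
  have h36pos : 0 < 36*l^2 - n^2 := by nlinarith
  have hD2 : (3*m*(6*l-n))^2 < D^2 := by
    have k1 : (3*m*(6*l-n))^2 < 24*l*n*(6*l-n)^2 := by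
      nlinarith [mul_pos hC (pow_pos (by linarith : (0:ℝ) < 6*l-n) 2)]
    have k2 : 24*l*n*(6*l-n)^2 ≤ (36*l^2-n^2)^2 := by
      nlinarith [sq_nonneg ((6*l-n)^2)]
    have k3 : (36*l^2-n^2)^2 ≤ D^2 := by nlinarith
    linarith
  have hDB1 : 3*m*(6*l-n) ≤ D := by nlinarith [hD2, hDpos]
  have hDB2 : -(3*m*(6*l-n)) ≤ D := by nlinarith [hD2, hDpos]
  set s : ℝ := 8*D with hs
  set p : ℝ := -2*B with hp
  have hsp1 : 0 ≤ s + 2*p := by simp only [hs, hp, hB]; nlinarith [hDB2]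
  have hsp2 : 0 ≤ s - 2*p := by simp only [hs, hp, hB]; nlinarith [hDB1]
  set α : ℝ := Real.sqrt (s + 2*p) with hα
  set β : ℝ := Real.sqrt (s - 2*p) with hβ
  have hα2 : α^2 = s + 2*p := Real.sq_sqrt hsp1
  have hβ2 : β^2 = s - 2*p := Real.sq_sqrt hsp2
  have hsum : ((α+β)/2)^2 + ((α-β)/2)^2 = s := by
    have : ((α+β)/2)^2 + ((α-β)/2)^2 = (α^2+β^2)/2 := by ring
    rw [this, hα2, hβ2]; ring
  have hprod : ((α+β)/2) * ((α-β)/2) = p := by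
    have : ((α+β)/2) * ((α-β)/2) = (α^2-β^2)/4 := by ring
    rw [this, hα2, hβ2]; ring
  refine ⟨(α + β)/2, (α - β)/2, ?_, ?_⟩
  · rintro ⟨h1, h2⟩
    have hs0 : s = 0 := by rw [← hsum, h1, h2]; ring
    simp only [hs] at hs0
    nlinarith
  · have hiden : (12*l*((α+β)/2)^2+6*m*((α+β)/2)*((α-β)/2)+2*n*((α-β)/2)^2)
          * (12*l*((α-β)/2)^2+6*m*((α+β)/2)*((α-β)/2)+2*n*((α+β)/2)^2)
        - (3*m*((α+β)/2)^2+4*n*((α+β)/2)*((α-β)/2)+3*m*((α-β)/2)^2)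
          * (3*m*((α+β)/2)^2+4*n*((α+β)/2)*((α-β)/2)+3*m*((α-β)/2)^2)
        = (24*l*n-9*m^2)*(((α+β)/2)^2+((α-β)/2)^2)^2
          + 2*B*(((α+β)/2)*((α-β)/2))*(((α+β)/2)^2+((α-β)/2)^2)
          + 4*D*(((α+β)/2)*((α-β)/2))^2 := by
      simp only [hB, hD]; ring
    rw [hsum, hprod] at hiden
    rw [hiden]
    have hval : (24*l*n-9*m^2)*s^2 + 2*B*p*s + 4*D*p^2
        = 576*D*((2*n^2+12*l*n-9*m^2)*(8*l^2-4*l*n+m^2)) := by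
      simp only [hs, hp, hB, hD]; ring
    rw [hval]
    have hQ : 0 ≤ 8*l^2 - 4*l*n + m^2 := by nlinarith [sq_nonneg (6*l-n)]
    have hPQ : (2*n^2+12*l*n-9*m^2)*(8*l^2-4*l*n+m^2) ≤ 0 :=
      mul_nonpos_iff.mpr (Or.inr ⟨hP, hQ⟩)
    have h576 : (0:ℝ) ≤ 576*D := by linarith
    calc 576*D*((2*n^2+12*l*n-9*m^2)*(8*l^2-4*l*n+m^2))
        ≤ 576*D*0 := by apply mul_le_mul_of_nonneg_left hPQ h576
      _ = 0 := by ring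

set_option maxHeartbeats 800000 in
theorem stmt_11 (l m n : ℝ) (A : ℝ → ℝ → ℝ)
    (hA : A = fun y₁ y₂ =>
      l * (y₁ ^ 4 + y₂ ^ 4) + m * (y₁ ^ 3 * y₂ + y₁ * y₂ ^ 3) + n * y₁ ^ 2 * y₂ ^ 2) :
    (∀ y₁ y₂ : ℝ, (y₁, y₂) ≠ (0, 0) →
        (!![pd1 (pd1 A) y₁ y₂, pd1 (pd2 A) y₁ y₂;
            pd2 (pd1 A) y₁ y₂, pd2 (pd2 A) y₁ y₂] : Matrix (Fin 2) (Fin 2) ℝ).PosDef) ↔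
      ((3 / 2) * Real.sqrt (4 * l ^ 2 + 2 * m ^ 2) - 3 * l < n ∧ n < 6 * l) := by
  have pd1A : pd1 A = fun x y => 4*l*x^3 + 3*m*x^2*y + 2*n*x*y^2 + m*y^3 := by
    funext x y
    simp only [pd1, hA]
    rw [show (fun t : ℝ => l * (t ^ 4 + y ^ 4) + m * (t ^ 3 * y + t * y ^ 3) + n * t ^ 2 * y ^ 2)
        = fun t : ℝ => l*t^4 + (m*y)*t^3 + (n*y^2)*t^2 + (m*y^3)*t + (l*y^4) from
      funext fun t => by ring]
    rw [deriv_quartic]; ring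
  have pd2A : pd2 A = fun x y => 4*l*y^3 + 3*m*x*y^2 + 2*n*x^2*y + m*x^3 := by
    funext x y
    simp only [pd2, hA]
    rw [show (fun t : ℝ => l * (x ^ 4 + t ^ 4) + m * (x ^ 3 * t + x * t ^ 3) + n * x ^ 2 * t ^ 2)
        = fun t : ℝ => l*t^4 + (m*x)*t^3 + (n*x^2)*t^2 + (m*x^3)*t + (l*x^4) from
      funext fun t => by ring]
    rw [deriv_quartic]; ring
  have p11 : pd1 (pd1 A) = fun x y => 12*l*x^2 + 6*m*x*y + 2*n*y^2 := by
    funext x y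
    rw [pd1A]; simp only [pd1]
    rw [show (fun t : ℝ => 4*l*t^3 + 3*m*t^2*y + 2*n*t*y^2 + m*y^3)
        = fun t : ℝ => (0:ℝ)*t^4 + (4*l)*t^3 + (3*m*y)*t^2 + (2*n*y^2)*t + (m*y^3) from
      funext fun t => by ring]
    rw [deriv_quartic]; ring
  have p21 : pd2 (pd1 A) = fun x y => 3*m*x^2 + 4*n*x*y + 3*m*y^2 := by
    funext x y
    rw [pd1A]; simp only [pd2]
    rw [show (fun t : ℝ => 4*l*x^3 + 3*m*x^2*t + 2*n*x*t^2 + m*t^3)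
        = fun t : ℝ => (0:ℝ)*t^4 + m*t^3 + (2*n*x)*t^2 + (3*m*x^2)*t + (4*l*x^3) from
      funext fun t => by ring]
    rw [deriv_quartic]; ring
  have p12 : pd1 (pd2 A) = fun x y => 3*m*x^2 + 4*n*x*y + 3*m*y^2 := by
    funext x y
    rw [pd2A]; simp only [pd1]
    rw [show (fun t : ℝ => 4*l*y^3 + 3*m*t*y^2 + 2*n*t^2*y + m*t^3)
        = fun t : ℝ => (0:ℝ)*t^4 + m*t^3 + (2*n*y)*t^2 + (3*m*y^2)*t + (4*l*y^3) from
      funext fun t => by ring]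
    rw [deriv_quartic]; ring
  have p22 : pd2 (pd2 A) = fun x y => 12*l*y^2 + 6*m*x*y + 2*n*x^2 := by
    funext x y
    rw [pd2A]; simp only [pd2]
    rw [show (fun t : ℝ => 4*l*t^3 + 3*m*x*t^2 + 2*n*x^2*t + m*x^3)
        = fun t : ℝ => (0:ℝ)*t^4 + (4*l)*t^3 + (3*m*x)*t^2 + (2*n*x^2)*t + (m*x^3) from
      funext fun t => by ring]
    rw [deriv_quartic]; ring
  simp only [p11, p12, p21, p22]
  constructor
  · intro h
    have h10 := h 1 0 (by simp)
    have hl : 0 < l := by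
      have := h10.dotProduct_mulVec_pos (x := ![1, 0]) (by intro hc; simpa using congrFun hc 0)
      simp [dotProduct, Matrix.mulVec, Fin.sum_univ_two] at this
      nlinarith [this]
    have hn : 0 < n := by
      have := h10.dotProduct_mulVec_pos (x := ![0, 1]) (by intro hc; simpa using congrFun hc 1)
      simp [dotProduct, Matrix.mulVec, Fin.sum_univ_two] at this
      nlinarith [this]
    have hC : 0 < 24*l*n - 9*m^2 := by
      have := h10.det_pos
      simp [Matrix.det_fin_two] at this
      nlinarith [this]
    have hn6l : n < 6*l := by
      have h11 := h 1 1 (by simp)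
      have := h11.dotProduct_mulVec_pos (x := ![1, -1]) (by intro hc; simpa using congrFun hc 0)
      simp [dotProduct, Matrix.mulVec, Fin.sum_univ_two] at this
      nlinarith [this]
    have hP : 0 < 2*n^2 + 12*l*n - 9*m^2 := by
      by_contra hP
      push_neg at hP
      obtain ⟨y₁, y₂, hne, hdetle⟩ := aux_fwd hl hn hC hn6l hP
      have hne' : (y₁, y₂) ≠ (0, 0) := by
        intro hc
        exact hne ⟨congrArg Prod.fst hc, congrArg Prod.snd hc⟩
      have hdet := (h y₁ y₂ hne').det_pos
      simp [Matrix.det_fin_two] at hdet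
      nlinarith [hdet, hdetle]
    refine ⟨?_, hn6l⟩
    have h23 : 0 < (2/3) * (n + 3*l) := by positivity
    have := (Real.sqrt_lt' h23).mpr (by nlinarith : 4*l^2 + 2*m^2 < ((2/3)*(n+3*l))^2)
    nlinarith [this]
  · rintro ⟨hlo, hn6l⟩
    have hsqrtnn : 0 ≤ Real.sqrt (4*l^2 + 2*m^2) := Real.sqrt_nonneg _
    have hsl : 2*|l| ≤ Real.sqrt (4*l^2 + 2*m^2) := by
      have h := Real.sqrt_le_sqrt (by nlinarith [sq_nonneg m] : (2*l)^2 ≤ 4*l^2+2*m^2)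
      rwa [Real.sqrt_sq_eq_abs, abs_mul, abs_two] at h
    have hn3l : 0 < n + 3*l := by
      have habs := le_abs_self l
      have habs2 := neg_abs_le l
      nlinarith [hlo, hsl]
    have hP : 0 < 2*n^2 + 12*l*n - 9*m^2 := by
      have h1 : Real.sqrt (4*l^2 + 2*m^2) < (2/3)*(n + 3*l) := by nlinarith [hlo]
      have h2 : 4*l^2 + 2*m^2 < ((2/3)*(n+3*l))^2 := by
        have := Real.sq_sqrt (by positivity : (0:ℝ) ≤ 4*l^2+2*m^2)
        nlinarith [h1, hsqrtnn]
      nlinarith [h2]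
    have hn : 0 < n := by nlinarith [sq_nonneg m]
    have hl : 0 < l := by linarith
    have hC : 0 < 24*l*n - 9*m^2 := by nlinarith
    intro y₁ y₂ hy
    have hy' : ¬(y₁ = 0 ∧ y₂ = 0) := by
      intro hc
      exact hy (by rw [hc.1, hc.2])
    have hspos : 0 < y₁^2 + y₂^2 := by
      rcases not_and_or.mp hy' with h1 | h1 <;> positivity
    have hcone : 4*(y₁*y₂)^2 ≤ (y₁^2+y₂^2)^2 := by nlinarith [sq_nonneg (y₁^2 - y₂^2)]
    have hdetp := aux_det hl hn hn6l hP hspos hcone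
    have hapos : 0 < 12*l*y₁^2 + 6*m*y₁*y₂ + 2*n*y₂^2 := by
      have := quadpos (a := 12*l) (b := 3*m) (c := 2*n) (x := y₁) (z := y₂)
        (by linarith) (by nlinarith) hy'
      nlinarith [this]
    have hdetpos : 0 < (12*l*y₁^2 + 6*m*y₁*y₂ + 2*n*y₂^2) * (12*l*y₂^2 + 6*m*y₁*y₂ + 2*n*y₁^2)
        - (3*m*y₁^2 + 4*n*y₁*y₂ + 3*m*y₂^2)^2 := by nlinarith [hdetp]
    refine Matrix.PosDef.of_dotProduct_mulVec_pos ?_ ?_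
    · unfold Matrix.IsHermitian
      ext i j
      fin_cases i <;> fin_cases j <;> simp
    · intro x hx
      have hx' : ¬(x 0 = 0 ∧ x 1 = 0) := by
        intro hc
        apply hx
        funext i
        fin_cases i
        · exact hc.1
        · exact hc.2
      have hq := quadpos hapos hdetpos hx'
      have hform : dotProduct (star x)
          ((!![12*l*y₁^2 + 6*m*y₁*y₂ + 2*n*y₂^2, 3*m*y₁^2 + 4*n*y₁*y₂ + 3*m*y₂^2;
              3*m*y₁^2 + 4*n*y₁*y₂ + 3*m*y₂^2, 12*l*y₂^2 + 6*m*y₁*y₂ + 2*n*y₁^2] :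
              Matrix (Fin 2) (Fin 2) ℝ).mulVec x)
          = (12*l*y₁^2 + 6*m*y₁*y₂ + 2*n*y₂^2)*(x 0)^2
            + 2*(3*m*y₁^2 + 4*n*y₁*y₂ + 3*m*y₂^2)*(x 0)*(x 1)
            + (12*l*y₂^2 + 6*m*y₁*y₂ + 2*n*y₁^2)*(x 1)^2 := by
        simp [dotProduct, Matrix.mulVec, Fin.sum_univ_two]
        ring
      rw [hform]
      exact hq
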